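/- Let a ∈ ℝⁿ (n ≥ 2) be alternance-free and v ∈ ℝⁿ Chebyshev. Then sign(μ(a,v)) = sign(a_{χ(a)} · v_{χ(a)}), where χ(a) is the index of the maximum-absolute-value component of a. -/
import Mathlib


open Filter

/-- A vector is Chebyshev if all of its components are non-zero. -/
def Cheb {n : ℕ} (v : Fin n → ℝ) : Prop := ∀ i, v i ≠ 0

/-- `mu a v` is the (unique, when `v` is Chebyshev) minimizer of `u ↦ ‖a - u • v‖`,
where `‖·‖` is the sup-norm on `Fin n → ℝ`. -/
noncomputable def mu {n : ℕ} (a v : Fin n → ℝ) : ℝ :=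
  Classical.epsilon fun t : ℝ => ∀ u : ℝ, ‖a - t • v‖ ≤ ‖a - u • v‖

noncomputable def phi {m n : ℕ} (A : Fin m → Fin n → ℝ) (v : Fin n → ℝ) : Fin m → ℝ :=
  fun i => mu (A i) v

noncomputable def psi {m n : ℕ} (A : Fin m → Fin n → ℝ) (u : Fin m → ℝ) : Fin n → ℝ :=
  fun j => mu (fun i => A i j) u

/-- `A` preserves Chebyshev systems. -/
def PreservesCheb {m n : ℕ} (A : Fin m → Fin n → ℝ) : Prop :=
  (∀ v : Fin n → ℝ, Cheb v → Cheb (phi A v)) ∧ (∀ u : Fin m → ℝ, Cheb u → Cheb (psi A u))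

/-- A vector is alternance-free if exactly one component attains the max absolute value. -/
def AlternanceFree {n : ℕ} (a : Fin n → ℝ) : Prop := ∃! i, |a i| = ‖a‖

/-- Chebyshev norm of the residual `A - u vᵀ`. -/
noncomputable def Cerr {m n : ℕ} (A : Fin m → Fin n → ℝ) (u : Fin m → ℝ) (v : Fin n → ℝ) : ℝ :=
  ⨆ i, ⨆ j, |A i j - u i * v j|

/-- Chebyshev norm of a matrix. -/
noncomputable def CnormM {m n : ℕ} (A : Fin m → Fin n → ℝ) : ℝ :=
  ⨆ i, ⨆ j, |A i j|

/-- The sequence `v⁽ᵏ⁾` of the alternating minimization method started at `v0`. -/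
noncomputable def vseq {m n : ℕ} (A : Fin m → Fin n → ℝ) (v0 : Fin n → ℝ) : ℕ → Fin n → ℝ
  | 0 => v0
  | k + 1 => psi A (phi A (vseq A v0 k))

lemma abs_le_abs_sub_of_mul_nonpos {x y : ℝ} (h : x * y ≤ 0) : |x| ≤ |x - y| := by
  have h2 : x ^ 2 ≤ (x - y) ^ 2 := by nlinarith
  rw [← Real.sqrt_sq_eq_abs, ← Real.sqrt_sq_eq_abs]
  exact Real.sqrt_le_sqrt h2

theorem stmt3 {n : ℕ} (hn : 2 ≤ n) (a v : Fin n → ℝ) (ha : AlternanceFree a) (hv : Cheb v)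
    (i : Fin n) (hi : |a i| = ‖a‖) :
    Real.sign (mu a v) = Real.sign (a i * v i) := by
  classical
  obtain ⟨i₀, hi₀, hui⟩ := ha
  have hii₀ : i = i₀ := hui i hi
  subst hii₀
  have hnt : Nontrivial (Fin n) := ⟨⟨0, by omega⟩, ⟨1, by omega⟩, by simp [Fin.ext_iff]⟩
  have huniq : ∀ j, j ≠ i → |a j| < ‖a‖ := by
    intro j hj
    have h1 : |a j| ≤ ‖a‖ := by simpa using norm_le_pi_norm a j
    rcases lt_or_eq_of_le h1 with h | h
    · exact h
    · exact absurd (hui j h) hj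
  have hane : a i ≠ 0 := by
    intro h0
    obtain ⟨j, hj⟩ := exists_ne i
    have h1 := huniq j hj
    have h2 : ‖a‖ = 0 := by rw [← hi, h0, abs_zero]
    have := abs_nonneg (a j)
    linarith
  have hnorm_pos : 0 < ‖a‖ := hi ▸ abs_pos.mpr hane
  have hvne : v i ≠ 0 := hv i
  have hvnorm : 0 < ‖v‖ := by
    have := norm_le_pi_norm v i
    simp only [Real.norm_eq_abs] at this
    exact lt_of_lt_of_le (abs_pos.mpr hvne) this
  -- β : max of |a j| over j ≠ i
  have hne : (Finset.univ.erase i).Nonempty := by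
    obtain ⟨j, hj⟩ := exists_ne i
    exact ⟨j, Finset.mem_erase.mpr ⟨hj, Finset.mem_univ j⟩⟩
  set β : ℝ := (Finset.univ.erase i).sup' hne (fun j => |a j|) with hβ
  have hβlt : β < ‖a‖ := by
    rw [hβ, Finset.sup'_lt_iff]
    intro j hj
    exact huniq j (Finset.mem_erase.mp hj).1
  have hβle : ∀ j, j ≠ i → |a j| ≤ β :=
    fun j hj => Finset.le_sup' (fun j => |a j|) (Finset.mem_erase.mpr ⟨hj, Finset.mem_univ j⟩)
  have hβ0 : 0 ≤ β := le_trans (abs_nonneg _) (hβle _ (exists_ne i).choose_spec)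
  -- choose ε and t0
  set D : ℝ := |a i * v i| * ‖v‖ + 1 with hD
  have hDpos : 0 < D := by positivity
  set ε : ℝ := min (1 / (2 * (v i) ^ 2)) ((‖a‖ - β) / D) with hε
  have hεpos : 0 < ε := by
    apply lt_min
    · positivity
    · exact div_pos (by linarith) hDpos
  set t0 : ℝ := ε * (a i * v i) with ht0
  have hεle1 : ε ≤ 1 / (2 * (v i) ^ 2) := min_le_left _ _
  have hεle2 : ε ≤ (‖a‖ - β) / D := min_le_right _ _
  have hkey : ε * (|a i * v i| * ‖v‖) < ‖a‖ - β := by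
    have h1 : ε * D ≤ ‖a‖ - β := by
      rw [← le_div_iff₀ hDpos] at *; exact hεle2
    have : ε * (|a i * v i| * ‖v‖) < ε * D := by
      rw [hD]; nlinarith
    linarith
  -- f t0 < ‖a‖
  have hft0 : ‖a - t0 • v‖ < ‖a‖ := by
    rw [pi_norm_lt_iff hnorm_pos]
    intro j
    simp only [Pi.sub_apply, Pi.smul_apply, smul_eq_mul, Real.norm_eq_abs]
    by_cases hj : j = i
    · subst hj
      have he : a j - t0 * v j = a j * (1 - ε * (v j) ^ 2) := by ring
      rw [he, abs_mul, ← hi]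
      have hv2 : 0 < (v j) ^ 2 := by positivity
      have h1 : ε * (v j) ^ 2 ≤ 1 / 2 := by
        rw [le_div_iff₀ (by positivity : (0:ℝ) < 2 * (v j)^2)] at hεle1
        linarith
      have h2 : ε * (v j) ^ 2 > 0 := by positivity
      have h3 : |1 - ε * (v j) ^ 2| < 1 := by
        rw [abs_lt]; constructor <;> linarith
      calc |a j| * |1 - ε * (v j) ^ 2| < |a j| * 1 := by
            exact mul_lt_mul_of_pos_left h3 (abs_pos.mpr hane)
        _ = |a j| := mul_one _
    · have h1 : |a j - t0 * v j| ≤ |a j| + |t0| * |v j| := by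
        calc |a j - t0 * v j| ≤ |a j| + |t0 * v j| := abs_sub _ _
          _ = |a j| + |t0| * |v j| := by rw [abs_mul]
      have h2 : |v j| ≤ ‖v‖ := by simpa using norm_le_pi_norm v j
      have h3 : |t0| = ε * |a i * v i| := by
        rw [ht0, abs_mul, abs_of_pos hεpos]
      have h4 : |t0| * |v j| ≤ ε * (|a i * v i| * ‖v‖) := by
        rw [h3, mul_assoc]
        exact mul_le_mul_of_nonneg_left (mul_le_mul_of_nonneg_left h2 (abs_nonneg _)) (le_of_lt hεpos)
      have h5 := hβle j hj
      linarith
  -- existence of a global minimizer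
  set R : ℝ := max (2 * ‖a‖ / |v i|) |t0| with hR
  have hR0 : 0 ≤ R := le_trans (abs_nonneg t0) (le_max_right _ _)
  have hcont : Continuous fun t : ℝ => ‖a - t • v‖ := by fun_prop
  obtain ⟨ts, htsmem, htsmin⟩ := (isCompact_Icc (a := -R) (b := R)).exists_isMinOn
    ⟨0, Set.mem_Icc.mpr ⟨by linarith, hR0⟩⟩ hcont.continuousOn
  have hlow : ∀ t : ℝ, |a i - t * v i| ≤ ‖a - t • v‖ := by
    intro t
    have := norm_le_pi_norm (a - t • v) i
    simpa [Real.norm_eq_abs] using this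
  have hglobal : ∀ u : ℝ, ‖a - ts • v‖ ≤ ‖a - u • v‖ := by
    intro u
    by_cases hu : u ∈ Set.Icc (-R) R
    · exact htsmin hu
    · have h1 : ‖a - ts • v‖ ≤ ‖a - t0 • v‖ :=
        htsmin ⟨neg_le_of_abs_le (le_max_right _ _), le_of_abs_le (le_max_right _ _)⟩
      have hRu : R < |u| := by
        simp only [Set.mem_Icc, not_and_or, not_le] at hu
        rcases hu with h | h
        · rw [abs_of_neg (by linarith)]; linarith
        · rw [abs_of_pos (by linarith)]; linarith
      have hvip : 0 < |v i| := abs_pos.mpr hvne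
      have h2 : 2 * ‖a‖ ≤ |u| * |v i| := by
        have : 2 * ‖a‖ / |v i| ≤ |u| := le_of_lt (lt_of_le_of_lt (le_max_left _ _) hRu)
        rw [div_le_iff₀ hvip] at this; linarith
      have h3 : ‖a‖ ≤ |a i - u * v i| := by
        have : |u * v i| - |a i| ≤ |a i - u * v i| := by
          have := abs_sub_abs_le_abs_sub (u * v i) (a i)
          rw [abs_sub_comm] at this; linarith
        rw [abs_mul] at this
        rw [← hi] at *
        linarith
      have h4 := hlow u
      linarith
  have hmu : ∀ u : ℝ, ‖a - (mu a v) • v‖ ≤ ‖a - u • v‖ :=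
    Classical.epsilon_spec (p := fun t : ℝ => ∀ u : ℝ, ‖a - t • v‖ ≤ ‖a - u • v‖) ⟨ts, hglobal⟩
  set m : ℝ := mu a v with hm
  have hmlt : ‖a - m • v‖ < ‖a‖ := lt_of_le_of_lt (hmu t0) hft0
  have hsign : 0 < m * (a i * v i) := by
    by_contra h
    push_neg at h
    have hx : a i * (m * v i) ≤ 0 := by nlinarith
    have h1 : |a i| ≤ |a i - m * v i| := abs_le_abs_sub_of_mul_nonpos hx
    have h2 := hlow m
    rw [hi] at h1
    linarith
  rcases lt_trichotomy (a i * v i) 0 with hc | hc | hc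
  · have hmneg : m < 0 := by nlinarith
    rw [Real.sign_of_neg hmneg, Real.sign_of_neg hc]
  · exfalso; rw [hc] at hsign; simp at hsign
  · have hmpos : 0 < m := by nlinarith
    rw [Real.sign_of_pos hmpos, Real.sign_of_pos hc]
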